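/- Let Ω₁ ⊆ ℝ^{n₁} be open and bounded, let c > 0, let 1 ≤ p ≤ ∞ with conjugate exponent p', and suppose S is a set of measurable functions on Ω₁ such that every u ∈ S satisfies ‖u‖_{L^p(Ω₁)} · |{x ∈ Ω₁ : |u(x)| ≥ c}|^{1/p'} ≥ c. Let Ω₂ ⊆ ℝ^{n₂} be open and bounded, and let Ω ⊆ ℝ^{n₁+n₂} be a measurable set containing Ω₁ × Ω₂. Then every measurable function v on Ω whose restriction v(·, y) to Ω₁ × {y} belongs to S for each y ∈ Ω₂ satisfies ‖v‖_{L^p(Ω)} · |{(x,y) ∈ Ω : |v(x,y)| ≥ c}|^{1/p'} ≥ c |Ω₂|. -/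

import Mathlib

open MeasureTheory Metric Set ENNReal

set_option maxHeartbeats 1000000

/-- lifting uniformly balancing sublevel inequalities to higher dimensions.
If every `u` in a set `S` of measurable functions on an open bounded `Ω₁ ⊆ ℝ^{n₁}` satisfies
`‖u‖_{L^p(Ω₁)} · |{x ∈ Ω₁ : |u(x)| ≥ c}|^(1/q) ≥ c` (where `1/p + 1/q = 1`), and
`Ω ⊆ ℝ^{n₁} × ℝ^{n₂}` is a measurable set containing `Ω₁ × Ω₂` with `Ω₂` open and bounded,
then every measurable `v` on `Ω` all of whose slices `v(·,y)`, `y ∈ Ω₂`, belong to `S`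
satisfies `‖v‖_{L^p(Ω)} · |{(x,y) ∈ Ω : |v(x,y)| ≥ c}|^(1/q) ≥ c |Ω₂|`. -/
theorem uniformly_balancing_lift (n₁ n₂ : ℕ)
    (Ω₁ : Set (EuclideanSpace ℝ (Fin n₁))) (hΩ₁o : IsOpen Ω₁)
    (hΩ₁b : Bornology.IsBounded Ω₁)
    (c : ℝ) (hc : 0 < c) (p q : ℝ≥0∞) (hp : 1 ≤ p) (hpq : 1 / p + 1 / q = 1)
    (S : Set (EuclideanSpace ℝ (Fin n₁) → ℝ))
    (hSmeas : ∀ u ∈ S, Measurable u)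
    (hS : ∀ u ∈ S,
      ENNReal.ofReal c ≤
        eLpNorm u p (volume.restrict Ω₁) *
          volume {x ∈ Ω₁ | c ≤ |u x|} ^ (1 / q).toReal)
    (Ω₂ : Set (EuclideanSpace ℝ (Fin n₂))) (hΩ₂o : IsOpen Ω₂)
    (hΩ₂b : Bornology.IsBounded Ω₂)
    (Ω : Set (EuclideanSpace ℝ (Fin n₁) × EuclideanSpace ℝ (Fin n₂)))
    (hΩmeas : MeasurableSet Ω) (hΩsub : Ω₁ ×ˢ Ω₂ ⊆ Ω)
    (v : EuclideanSpace ℝ (Fin n₁) × EuclideanSpace ℝ (Fin n₂) → ℝ)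
    (hv : Measurable v)
    (hslice : ∀ y ∈ Ω₂, (fun x => v (x, y)) ∈ S) :
    ENNReal.ofReal c * volume Ω₂ ≤
      eLpNorm v p (volume.restrict Ω) *
        volume {z ∈ Ω | c ≤ |v z|} ^ (1 / q).toReal := by
  classical
  let X := EuclideanSpace ℝ (Fin n₁)
  let Y := EuclideanSpace ℝ (Fin n₂)
  set μ := (volume : Measure X).restrict Ω₁ with hμdef
  set ν := (volume : Measure Y).restrict Ω₂ with hνdef
  set r := (1 / q).toReal with hrdef
  have hp0 : p ≠ 0 := fun h => by simp [h] at hp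
  set s : Set (X × Y) := {z | c ≤ |v z|} with hsdef
  have hsmeas : MeasurableSet s := measurableSet_le measurable_const hv.abs
  -- reduction to the product set Ω₁ ×ˢ Ω₂
  have hprodvol : (volume : Measure (X × Y)).restrict (Ω₁ ×ˢ Ω₂) = μ.prod ν := by
    rw [hμdef, hνdef, Measure.prod_restrict, ← Measure.volume_eq_prod]
  have hA : eLpNorm v p (μ.prod ν) ≤ eLpNorm v p (volume.restrict Ω) := by
    rw [← hprodvol]
    exact eLpNorm_mono_measure _ (Measure.restrict_mono hΩsub le_rfl)
  have hB : (μ.prod ν) s ≤ volume {z ∈ Ω | c ≤ |v z|} := by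
    rw [← hprodvol, Measure.restrict_apply hsmeas]
    exact measure_mono fun z hz => ⟨hΩsub hz.2, hz.1⟩
  have hr0 : (0 : ℝ) ≤ r := ENNReal.toReal_nonneg
  refine le_trans ?_ (mul_le_mul' hA (ENNReal.rpow_le_rpow hB hr0))
  -- slice quantities
  set G : Y → ℝ≥0∞ := fun y => μ ((fun x => (x, y)) ⁻¹' s) with hGdef
  have hGmeas : Measurable G := measurable_measure_prodMk_right hsmeas
  have hGeq : ∀ y : Y, volume {x ∈ Ω₁ | c ≤ |v (x, y)|} = G y := by
    intro y
    have hpre : MeasurableSet ((fun x : X => (x, y)) ⁻¹' s) :=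
      hsmeas.preimage (measurable_id.prodMk measurable_const)
    have hGy : G y = volume ((fun x : X => (x, y)) ⁻¹' s ∩ Ω₁) := Measure.restrict_apply hpre
    rw [hGy]
    congr 1
    ext x
    simp only [Set.mem_setOf_eq, Set.mem_preimage, Set.mem_inter_iff, hsdef]
    exact and_comm
  set F : Y → ℝ≥0∞ := fun y => eLpNorm (fun x => v (x, y)) p μ with hFdef
  have key : ∀ y ∈ Ω₂, ENNReal.ofReal c ≤ F y * G y ^ r := by
    intro y hy
    have h := hS _ (hslice y hy)
    rwa [hGeq y] at h
  have step1 : ENNReal.ofReal c * volume Ω₂ ≤ ∫⁻ y, F y * G y ^ r ∂ν := by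
    calc ENNReal.ofReal c * volume Ω₂ = ∫⁻ _ in Ω₂, ENNReal.ofReal c := by
          rw [setLIntegral_const]
      _ ≤ _ := by
          refine lintegral_mono_ae ?_
          filter_upwards [ae_restrict_mem hΩ₂o.measurableSet] with y hy using key y hy
  refine le_trans step1 ?_
  have hBprod : (μ.prod ν) s = ∫⁻ y, G y ∂ν := Measure.prod_apply_symm hsmeas
  by_cases hp1 : p = 1
  · -- case p = 1, so 1/q = 0
    have hq0 : 1 / q = 0 := by
      rw [hp1, one_div_one] at hpq
      exact (ENNReal.add_right_inj one_ne_top).mp (by rw [add_zero]; exact hpq)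
    have hr : r = 0 := by rw [hrdef, hq0]; simp
    have hFeq : ∀ y, F y = ∫⁻ x, (‖v (x, y)‖₊ : ℝ≥0∞) ∂μ := by
      intro y
      have : F y = eLpNorm (fun x => v (x, y)) p μ := rfl
      rw [this, hp1]
      exact eLpNorm_one_eq_lintegral_enorm
    calc ∫⁻ y, F y * G y ^ r ∂ν = ∫⁻ y, ∫⁻ x, (‖v (x, y)‖₊ : ℝ≥0∞) ∂μ ∂ν := by
          simp only [hr, ENNReal.rpow_zero, mul_one]
          exact lintegral_congr fun y => hFeq y
      _ = ∫⁻ z, (‖v z‖₊ : ℝ≥0∞) ∂(μ.prod ν) :=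
          (lintegral_prod_symm' _ hv.nnnorm.coe_nnreal_ennreal).symm
      _ = eLpNorm v p (μ.prod ν) := by rw [hp1, eLpNorm_one_eq_lintegral_enorm]; rfl
      _ ≤ eLpNorm v p (μ.prod ν) * (μ.prod ν) s ^ r := by
          rw [hr, ENNReal.rpow_zero, mul_one]
  by_cases hptop : p = ∞
  · -- case p = ∞, so q = 1 and r = 1
    have hq1 : 1 / q = 1 := by
      rw [hptop, ENNReal.div_top, zero_add] at hpq
      exact hpq
    have hr : r = 1 := by rw [hrdef, hq1]; simp
    set M := eLpNormEssSup v (μ.prod ν) with hMdef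
    have hbdd : ∀ᵐ z ∂(μ.prod ν), (‖v z‖₊ : ℝ≥0∞) ≤ M := enorm_ae_le_eLpNormEssSup v _
    have hmset : MeasurableSet {z : X × Y | (‖v z‖₊ : ℝ≥0∞) ≤ M} :=
      measurableSet_le hv.nnnorm.coe_nnreal_ennreal measurable_const
    have hswap : ∀ᵐ y ∂ν, ∀ᵐ x ∂μ, (‖v (x, y)‖₊ : ℝ≥0∞) ≤ M := by
      refine (Measure.ae_ae_comm hmset).mp ?_
      exact (Measure.ae_prod_iff_ae_ae hmset).mp hbdd
    have hFle : ∀ᵐ y ∂ν, F y ≤ M := by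
      filter_upwards [hswap] with y hy
      have hFy : F y = eLpNormEssSup (fun x => v (x, y)) μ := by
        have h0 : F y = eLpNorm (fun x => v (x, y)) p μ := rfl
        rw [h0, hptop, eLpNorm_exponent_top]
      rw [hFy]
      exact essSup_le_of_ae_le M hy
    calc ∫⁻ y, F y * G y ^ r ∂ν ≤ ∫⁻ y, M * G y ∂ν := by
          refine lintegral_mono_ae ?_
          filter_upwards [hFle] with y hy
          rw [hr, ENNReal.rpow_one]
          exact mul_le_mul_left hy _
      _ = M * ∫⁻ y, G y ∂ν := lintegral_const_mul M hGmeas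
      _ = eLpNorm v p (μ.prod ν) * (μ.prod ν) s ^ r := by
          rw [hBprod, hr, ENNReal.rpow_one, hptop, eLpNorm_exponent_top, hMdef]
  -- case 1 < p < ∞
  have hplt : 1 < p := lt_of_le_of_ne hp (Ne.symm hp1)
  have hq0 : q ≠ 0 := by
    intro h
    rw [h] at hpq
    simp [ENNReal.div_zero] at hpq
  have hqtop : q ≠ ∞ := by
    intro h
    rw [h, ENNReal.div_top, add_zero, one_div] at hpq
    exact hp1 (ENNReal.inv_eq_one.mp hpq)
  set pr := p.toReal with hprdef
  set qr := q.toReal with hqrdef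
  have hpr1 : 1 < pr := by
    rw [hprdef, ← ENNReal.toReal_one]
    exact (ENNReal.toReal_lt_toReal one_ne_top hptop).mpr hplt
  have hpr0 : pr ≠ 0 := by positivity
  have hsum : 1 / pr + 1 / qr = 1 := by
    have h := congrArg ENNReal.toReal hpq
    rwa [ENNReal.toReal_add (ENNReal.div_lt_top one_ne_top hp0).ne
      (ENNReal.div_lt_top one_ne_top hq0).ne, ENNReal.toReal_div, ENNReal.toReal_div,
      ENNReal.toReal_one] at h
  have hconj : pr.HolderConjugate qr := ⟨by rw [inv_one, inv_eq_one_div, inv_eq_one_div]; exact hsum, by linarith,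
    one_div_pos.mp (by have := (div_lt_one (by linarith : (0:ℝ) < pr)).mpr hpr1; linarith)⟩
  have hqr0 : qr ≠ 0 := hconj.symm.pos.ne'
  have hr : r = 1 / qr := by rw [hrdef, ENNReal.toReal_div, ENNReal.toReal_one]
  have hFeq : ∀ y, F y = (∫⁻ x, (‖v (x, y)‖₊ : ℝ≥0∞) ^ pr ∂μ) ^ (1 / pr) := fun y =>
    eLpNorm_eq_lintegral_rpow_enorm_toReal hp0 hptop
  have hFmeas : Measurable F := by
    have hFeq' : F = fun y => (∫⁻ x, (‖v (x, y)‖₊ : ℝ≥0∞) ^ pr ∂μ) ^ (1 / pr) := funext hFeq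
    rw [hFeq']
    exact ((hv.nnnorm.coe_nnreal_ennreal.pow_const pr).lintegral_prod_left').pow_const _
  have holder := ENNReal.lintegral_mul_le_Lp_mul_Lq ν hconj hFmeas.aemeasurable
    ((hGmeas.pow_const r).aemeasurable)
  calc ∫⁻ y, F y * G y ^ r ∂ν
      ≤ (∫⁻ y, F y ^ pr ∂ν) ^ (1 / pr) * (∫⁻ y, (G y ^ r) ^ qr ∂ν) ^ (1 / qr) := holder
    _ = eLpNorm v p (μ.prod ν) * (μ.prod ν) s ^ r := by
        have h1 : ∀ y, F y ^ pr = ∫⁻ x, (‖v (x, y)‖₊ : ℝ≥0∞) ^ pr ∂μ := by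
          intro y
          rw [hFeq y, ← ENNReal.rpow_mul, one_div_mul_cancel hpr0, ENNReal.rpow_one]
        have h2 : ∀ y, (G y ^ r) ^ qr = G y := by
          intro y
          rw [← ENNReal.rpow_mul, hr, one_div_mul_cancel hqr0, ENNReal.rpow_one]
        rw [lintegral_congr h1, lintegral_congr h2,
          ← lintegral_prod_symm' _ (hv.nnnorm.coe_nnreal_ennreal.pow_const pr), ← hBprod, hr,
          eLpNorm_eq_lintegral_rpow_enorm_toReal hp0 hptop]
        rfl
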